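/- The 5×5 real matrix M = [[−4,0,2√2,0,0],[0,−2,0,2,0],[−2√2,0,0,0,2√2],[0,−2,0,2,0],[0,0,−2√2,0,4]] satisfies M³ = 0, M² ≠ 0, and rank(M) = 3; hence its only eigenvalue is 0 with geometric multiplicity 2. -/
import Mathlib


open Matrix Real

noncomputable def M14 : Matrix (Fin 5) (Fin 5) ℝ :=
  !![-4, 0, 2 * Real.sqrt 2, 0, 0;
     0, -2, 0, 2, 0;
     -(2 * Real.sqrt 2), 0, 0, 0, 2 * Real.sqrt 2;
     0, -2, 0, 2, 0;
     0, 0, -(2 * Real.sqrt 2), 0, 4]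

noncomputable def M14sq : Matrix (Fin 5) (Fin 5) ℝ :=
  !![8, 0, -(8 * Real.sqrt 2), 0, 8;
     0, 0, 0, 0, 0;
     8 * Real.sqrt 2, 0, -16, 0, 8 * Real.sqrt 2;
     0, 0, 0, 0, 0;
     8, 0, -(8 * Real.sqrt 2), 0, 8]

set_option maxHeartbeats 1000000 in
lemma hsq14 : M14 * M14 = M14sq := by
  have hs : Real.sqrt 2 * Real.sqrt 2 = 2 := Real.mul_self_sqrt (by norm_num)
  ext i j
  fin_cases i <;> fin_cases j <;>
    simp [M14, M14sq, Matrix.mul_apply, Fin.sum_univ_five, Matrix.vecHead, Matrix.vecTail] <;>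
    nlinarith [hs]

set_option maxHeartbeats 1000000 in
lemma hcube14 : M14sq * M14 = 0 := by
  have hs : Real.sqrt 2 * Real.sqrt 2 = 2 := Real.mul_self_sqrt (by norm_num)
  ext i j
  fin_cases i <;> fin_cases j <;>
    simp [M14, M14sq, Matrix.mul_apply, Fin.sum_univ_five, Matrix.vecHead, Matrix.vecTail] <;>
    nlinarith [hs]

lemma hpow3_14 : M14 ^ 3 = 0 := by
  have : M14 ^ 3 = M14 * M14 * M14 := by rw [pow_succ, pow_two]
  rw [this, hsq14, hcube14]

noncomputable def kv14 : Fin 2 → (Fin 5 → ℝ) :=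
  ![![Real.sqrt 2, 0, 2, 0, Real.sqrt 2], ![0, 1, 0, 1, 0]]

lemma hker14 : LinearMap.ker M14.mulVecLin = Submodule.span ℝ (Set.range kv14) := by
  have hs : Real.sqrt 2 * Real.sqrt 2 = 2 := Real.mul_self_sqrt (by norm_num)
  apply le_antisymm
  · intro x hx
    simp only [LinearMap.mem_ker, Matrix.mulVecLin_apply] at hx
    have e0 := congrFun hx 0
    have e1 := congrFun hx 1
    have e4 := congrFun hx 4
    simp [M14, Matrix.mulVec, dotProduct, Fin.sum_univ_five, Matrix.vecHead,
      Matrix.vecTail] at e0 e1 e4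
    have hx0 : x 0 = Real.sqrt 2 * x 2 / 2 := by linarith
    have hx3 : x 3 = x 1 := by linarith
    have hx4 : x 4 = Real.sqrt 2 * x 2 / 2 := by linarith
    have : x = (x 2 / 2) • kv14 0 + (x 1) • kv14 1 := by
      funext i
      fin_cases i <;>
        simp [kv14, hx0, hx3, hx4] <;> ring
    rw [this]
    exact Submodule.add_mem _
      (Submodule.smul_mem _ _ (Submodule.subset_span ⟨0, rfl⟩))
      (Submodule.smul_mem _ _ (Submodule.subset_span ⟨1, rfl⟩))
  · rw [Submodule.span_le]
    rintro _ ⟨i, rfl⟩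
    simp only [SetLike.mem_coe, LinearMap.mem_ker, Matrix.mulVecLin_apply]
    fin_cases i <;>
      · funext j
        fin_cases j <;>
          simp [M14, kv14, Matrix.mulVec, dotProduct, Fin.sum_univ_five,
            Matrix.vecHead, Matrix.vecTail] <;> nlinarith [hs]

lemma hkerrank14 : Module.finrank ℝ ↥(LinearMap.ker M14.mulVecLin) = 2 := by
  rw [hker14]
  have hli : LinearIndependent ℝ kv14 := by
    rw [show kv14 = ![kv14 0, kv14 1] by funext i; fin_cases i <;> rfl]
    rw [LinearIndependent.pair_iff]
    intro s t hst
    have h1 := congrFun hst 1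
    have h2 := congrFun hst 2
    simp [kv14] at h1 h2
    exact ⟨by linarith, by linarith⟩
  rw [finrank_span_eq_card hli]
  simp

theorem stmt_14 :
    M14 ^ 3 = 0 ∧ M14 ^ 2 ≠ 0 ∧ M14.rank = 3 ∧
    (∀ μ : ℝ, Module.End.HasEigenvalue M14.mulVecLin μ → μ = 0) ∧
    Module.finrank ℝ ↥(LinearMap.ker M14.mulVecLin) = 2 := by
  refine ⟨hpow3_14, ?_, ?_, ?_, hkerrank14⟩
  · intro h
    have h2 : M14 ^ 2 = M14 * M14 := sq M14
    rw [h2, hsq14] at h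
    have := congrFun (congrFun h 0) 0
    simp [M14sq] at this
  · have hrn := LinearMap.finrank_range_add_finrank_ker M14.mulVecLin
    have h5 : Module.finrank ℝ (Fin 5 → ℝ) = 5 := by simp
    rw [h5, hkerrank14] at hrn
    rw [Matrix.rank]
    omega
  · intro μ hμ
    obtain ⟨v, hv⟩ := hμ.exists_hasEigenvector
    have hp := hv.pow_apply 3
    have hlin : M14.mulVecLin ^ 3 = (M14 ^ 3).mulVecLin := by
      simp only [pow_succ, pow_zero, one_mul, Matrix.mulVecLin_mul]
      rfl
    rw [hlin, hpow3_14] at hp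
    simp only [Matrix.mulVecLin_zero, LinearMap.zero_apply] at hp
    have : μ ^ 3 = 0 := by
      by_contra hne
      exact hv.right (by
        have := congrArg (fun w => (μ ^ 3)⁻¹ • w) hp.symm
        simpa [smul_smul, inv_mul_cancel₀ hne] using this)
    exact pow_eq_zero_iff (by norm_num) |>.mp this
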